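/- Let t satisfy t² = −1 in a commutative ring, let (I,·) be a bar-consistent anisotropic super Cartan datum with bilinear form φ as above, and let ν, ν' ∈ ℤ_{≥0}[I]. Then t^{φ(ν',ν) − φ(ν,ν')} = (−1)^{(ν·ν')/2 + p(ν)p(ν')}, where p(ν) = ∑ᵢ cᵢ p(i) mod 2 for ν = ∑ᵢ cᵢ i. -/
import Mathlib


/-- A bar-consistent anisotropic super Cartan datum (see paper, Definition 2.1). -/
structure SuperCartanDatum (I : Type*) where
  form : I → I → ℤ
  d : I → ℤ
  a : I → I → ℤ
  p : I → ℤ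
  form_symm : ∀ i j, form i j = form j i
  d_def : ∀ i, form i i = 2 * d i
  d_pos : ∀ i, 0 < d i
  a_def : ∀ i j, 2 * form i j = form i i * a i j
  a_nonpos : ∀ i j, i ≠ j → a i j ≤ 0
  p_range : ∀ i, p i = 0 ∨ p i = 1
  aniso : ∀ i j, p i = 1 → 2 ∣ a i j
  barcons : ∀ i, 2 ∣ (d i - p i)

/-- The form `φ` on generators, relative to a fixed total order on `I`. -/
def phi {I : Type*} [LinearOrder I] (D : SuperCartanDatum I) (i j : I) : ℤ :=
  if j < i then D.d i * D.a i j
  else if j = i then D.d i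
  else -2 * D.p i * D.p j

/-- The bilinear extension of `φ` to `ℤ_{≥0}[I]`. -/
def phiExt {I : Type*} [LinearOrder I] (D : SuperCartanDatum I) (ν ν' : I →₀ ℕ) : ℤ :=
  ν.sum fun i c => ν'.sum fun j c' => (c : ℤ) * (c' : ℤ) * phi D i j

/-- The bilinear extension of the Cartan form `·` to `ℤ_{≥0}[I]`. -/
def formExt {I : Type*} (D : SuperCartanDatum I) (ν ν' : I →₀ ℕ) : ℤ :=
  ν.sum fun i c => ν'.sum fun j c' => (c : ℤ) * (c' : ℤ) * D.form i j

/-- The additive extension of the parity `p` to `ℤ_{≥0}[I]`. -/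
def pExt {I : Type*} (D : SuperCartanDatum I) (ν : I →₀ ℕ) : ℤ :=
  ν.sum fun i c => (c : ℤ) * D.p i

-- form i j = d i * a i j
lemma form_eq {I : Type*} (D : SuperCartanDatum I) (i j : I) :
    D.form i j = D.d i * D.a i j := by
  have h := D.a_def i j
  rw [D.d_def i] at h
  have : (2:ℤ) * D.form i j = 2 * (D.d i * D.a i j) := by linarith
  exact mul_left_cancel₀ (by norm_num) this

lemma form_even {I : Type*} (D : SuperCartanDatum I) (i j : I) :
    (2:ℤ) ∣ D.form i j := by
  rw [form_eq]
  rcases D.p_range i with h | h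
  · obtain ⟨m, hm⟩ := D.barcons i
    exact Dvd.dvd.mul_right ⟨m, by omega⟩ _
  · exact Dvd.dvd.mul_left (D.aniso i j h) _

lemma key {I : Type*} [LinearOrder I] (D : SuperCartanDatum I) (i j : I) :
    (4:ℤ) ∣ (phi D j i - phi D i j - (D.form i j + 2 * D.p i * D.p j)) := by
  have hpi : D.p i * D.p i = D.p i := by rcases D.p_range i with h | h <;> rw [h] <;> ring
  rcases lt_trichotomy i j with h | h | h
  · -- i < j : phi D j i = d j * a j i, phi D i j = -2 p i p j
    rw [phi, phi, if_pos h, if_neg (not_lt.mpr h.le), if_neg h.ne']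
    have : D.form i j = D.form j i := D.form_symm i j
    rw [this, form_eq]
    exact ⟨0, by ring⟩
  · subst h
    rw [D.d_def]
    obtain ⟨m, hm⟩ := D.barcons i
    exact ⟨-(D.p i + m), by nlinarith [hpi]⟩
  · -- j < i : phi D j i = -2 p j p i, phi D i j = d i * a i j
    rw [phi, phi, if_pos h, if_neg (not_lt.mpr h.le), if_neg h.ne']
    rw [form_eq]
    obtain ⟨m, hm⟩ := form_even D i j
    rw [form_eq] at hm
    exact ⟨-(D.p i * D.p j + m), by nlinarith⟩

/-- If `t² = −1`, then for `ν, ν' ∈ ℤ_{≥0}[I]`,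
`t^{φ(ν',ν) − φ(ν,ν')} = (−1)^{(ν·ν')/2 + p(ν)p(ν')}`. -/
theorem stmt13 {I : Type*} [LinearOrder I] {R : Type*} [CommRing R]
    (D : SuperCartanDatum I) (t : Rˣ) (ht : (t : R) ^ 2 = -1) (ν ν' : I →₀ ℕ) :
    t ^ (phiExt D ν' ν - phiExt D ν ν') =
      (-1 : Rˣ) ^ (formExt D ν ν' / 2 + pExt D ν * pExt D ν') := by
  have t2 : t ^ 2 = (-1 : Rˣ) := by
    ext; push_cast; simpa using ht
  have t4 : t ^ 4 = 1 := by
    rw [show (4:ℕ) = 2*2 from rfl, pow_mul, t2]; simp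
  set q : ℤ := formExt D ν ν' / 2 + pExt D ν * pExt D ν' with hq
  have hdvd : (4:ℤ) ∣ (phiExt D ν' ν - phiExt D ν ν')
      - (formExt D ν ν' + 2 * (pExt D ν * pExt D ν')) := by
    have h1 : phiExt D ν' ν = ∑ i ∈ ν.support, ∑ j ∈ ν'.support,
        (ν i : ℤ) * (ν' j : ℤ) * phi D j i := by
      rw [phiExt, Finsupp.sum_comm]
      simp only [Finsupp.sum]
      exact Finset.sum_congr rfl fun i _ => Finset.sum_congr rfl fun j _ => by ring
    have h2 : phiExt D ν ν' = ∑ i ∈ ν.support, ∑ j ∈ ν'.support,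
        (ν i : ℤ) * (ν' j : ℤ) * phi D i j := rfl
    have h3 : formExt D ν ν' = ∑ i ∈ ν.support, ∑ j ∈ ν'.support,
        (ν i : ℤ) * (ν' j : ℤ) * D.form i j := rfl
    have h4 : pExt D ν * pExt D ν' = ∑ i ∈ ν.support, ∑ j ∈ ν'.support,
        (ν i : ℤ) * (ν' j : ℤ) * (D.p i * D.p j) := by
      rw [pExt, pExt, Finsupp.sum, Finsupp.sum, Finset.sum_mul_sum]
      exact Finset.sum_congr rfl fun i _ => Finset.sum_congr rfl fun j _ => by ring
    rw [h1, h2, h3, h4]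
    rw [Finset.mul_sum, ← Finset.sum_sub_distrib, ← Finset.sum_add_distrib,
      ← Finset.sum_sub_distrib]
    apply Finset.dvd_sum
    intro i _
    rw [Finset.mul_sum, ← Finset.sum_sub_distrib, ← Finset.sum_add_distrib,
      ← Finset.sum_sub_distrib]
    apply Finset.dvd_sum
    intro j _
    obtain ⟨m, hm⟩ := key D i j
    exact ⟨(ν i : ℤ) * (ν' j : ℤ) * m, by linear_combination ((ν i : ℤ) * (ν' j : ℤ)) * hm⟩
  obtain ⟨k, hk⟩ := hdvd
  have hform : 2 * (formExt D ν ν' / 2) = formExt D ν ν' := by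
    apply Int.mul_ediv_cancel'
    rw [formExt]
    apply Finset.dvd_sum; intro i _; apply Finset.dvd_sum; intro j _
    exact Dvd.dvd.mul_left (form_even D i j) _
  have hexp : phiExt D ν' ν - phiExt D ν ν' = 2 * q + 4 * k := by
    rw [hq]; omega
  rw [hexp, zpow_add, zpow_mul, zpow_mul]
  have e2 : t ^ (2:ℤ) = -1 := by rw [show (2:ℤ) = ((2:ℕ):ℤ) from rfl, zpow_natCast, t2]
  have e4 : t ^ (4:ℤ) = 1 := by rw [show (4:ℤ) = ((4:ℕ):ℤ) from rfl, zpow_natCast, t4]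
  rw [e2, e4, one_zpow, mul_one]
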